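/- Let ρ be a Hermitian complex matrix indexed by (Fin dA × Fin dB) × (Fin dA × Fin dB) and let R be its realignment. For every n ≥ 1, let σ ∈ Perm (Fin (2n)) be the product of transpositions (1 2)(3 4)⋯(2n−1 2n) and let τ ∈ Perm (Fin (2n)) be the product of transpositions (2 3)(4 5)⋯(2n 1) (cyclically shifted pairing). Then trace((R * Rᴴ)^n) = trace((W_σ^A ⊗ W_τ^B) * ρ^{⊗2n}). In particular the 2n-th realignment moment of a bipartite state is the expectation value of a tensor product of SWAP operators acting pairwise on 2n copies of ρ. -/
import Mathlib


open Matrix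

/-- The `m`-fold tensor power of a square matrix, as a matrix on `Fin m → D`. -/
noncomputable def tensorPow {D : Type*} [Fintype D] (ρ : Matrix D D ℂ) (m : ℕ) :
    Matrix (Fin m → D) (Fin m → D) ℂ :=
  Matrix.of fun x y => ∏ t, ρ (x t) (y t)

/-- The per-party permutation operator `W_σ^A ⊗ W_τ^B` on `m` copies of a bipartite system. -/
noncomputable def permOp2 {dA dB : ℕ} {m : ℕ} (σ τ : Equiv.Perm (Fin m)) :
    Matrix (Fin m → Fin dA × Fin dB) (Fin m → Fin dA × Fin dB) ℂ :=
  Matrix.of fun x y =>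
    if ∀ t, (x t).1 = (y (σ t)).1 ∧ (x t).2 = (y (τ t)).2 then 1 else 0

/-- The realignment of a bipartite matrix. -/
noncomputable def realign {dA dB : ℕ}
    (ρ : Matrix (Fin dA × Fin dB) (Fin dA × Fin dB) ℂ) :
    Matrix (Fin dA × Fin dA) (Fin dB × Fin dB) ℂ :=
  Matrix.of fun p q => ρ (p.1, q.1) (p.2, q.2)

/-- The `2n`-th realignment moment of a bipartite state equals the expectation value of a
tensor product of SWAP operators acting pairwise on `2n` copies of `ρ`:
`σ = (1 2)(3 4)⋯(2n−1 2n)` on the `A` factors and the cyclically shifted pairing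
`τ = (2 3)(4 5)⋯(2n 1)` on the `B` factors (written here 0-indexed). -/
lemma pow_succ_apply {I : Type*} [Fintype I] [DecidableEq I] (M : Matrix I I ℂ) :
    ∀ (m : ℕ) (i j : I), (M ^ (m+1)) i j =
      ∑ f : Fin m → I,
        (∏ k : Fin m, M ((Fin.cons i f : Fin (m+1) → I) k.castSucc) (f k)) *
          M ((Fin.cons i f : Fin (m+1) → I) (Fin.last m)) j := by
  intro m
  induction m with
  | zero =>
    intro i j
    simp [Fin.last]
  | succ m IH =>
    intro i j
    rw [pow_succ, Matrix.mul_apply]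
    simp_rw [IH, Finset.sum_mul]
    rw [← Equiv.sum_comp (Fin.snocEquiv (fun _ => I))
      (fun f : Fin (m+1) → I =>
        (∏ k : Fin (m+1), M ((Fin.cons i f : Fin (m+2) → I) k.castSucc) (f k)) *
          M ((Fin.cons i f : Fin (m+2) → I) (Fin.last (m+1))) j),
      Fintype.sum_prod_type]
    refine Finset.sum_congr rfl fun x _ => Finset.sum_congr rfl fun f _ => ?_
    have hval : Fin.snocEquiv (fun _ => I) (x, f) = Fin.snoc f x := rfl
    rw [hval]
    have hcs : ∀ l : Fin (m+1),
        (Fin.cons i (Fin.snoc f x) : Fin (m+2) → I) l.castSucc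
          = (Fin.cons i f : Fin (m+1) → I) l := by
      intro l
      refine Fin.cases ?_ ?_ l
      · simp
      · intro l'
        rw [← Fin.succ_castSucc, Fin.cons_succ, Fin.cons_succ, Fin.snoc_castSucc]
    rw [Fin.prod_univ_castSucc
      (f := fun k : Fin (m+1) => M ((Fin.cons i (Fin.snoc f x) : Fin (m+2) → I) k.castSucc)
        ((Fin.snoc f x : Fin (m+1) → I) k))]
    have hlast : (Fin.cons i (Fin.snoc f x) : Fin (m+2) → I) (Fin.last (m+1)) = x := by
      have h1 : Fin.last (m+1) = (Fin.last m).succ := rfl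
      rw [h1, Fin.cons_succ, Fin.snoc_last]
    rw [hlast]
    simp only [hcs, Fin.snoc_castSucc, Fin.snoc_last]

lemma trace_pow_eq_sum {I : Type*} [Fintype I] [DecidableEq I] (M : Matrix I I ℂ) (m : ℕ) :
    Matrix.trace (M ^ (m+1)) =
      ∑ g : Fin (m+1) → I, ∏ k : Fin (m+1), M (g k) (g (k+1)) := by
  rw [Matrix.trace]
  simp only [Matrix.diag_apply, pow_succ_apply]
  rw [← Equiv.sum_comp (Fin.consEquiv (fun _ => I))
    (fun g : Fin (m+1) → I => ∏ k : Fin (m+1), M (g k) (g (k+1))), Fintype.sum_prod_type]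
  refine Finset.sum_congr rfl fun i _ => Finset.sum_congr rfl fun f _ => ?_
  have hval : Fin.consEquiv (fun _ => I) (i, f) = Fin.cons i f := rfl
  rw [hval]
  rw [Fin.prod_univ_castSucc
    (f := fun k : Fin (m+1) => M ((Fin.cons i f : Fin (m+1) → I) k)
      ((Fin.cons i f : Fin (m+1) → I) (k+1)))]
  congr 1
  · refine Finset.prod_congr rfl fun k _ => ?_
    congr 1
    rw [Fin.coeSucc_eq_succ, Fin.cons_succ]
  · congr 1
    rw [Fin.last_add_one, Fin.cons_zero]
section NatAux
variable {n : ℕ}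

lemma natL1 (hn : 0 < n) {k : ℕ} (hk : k < n) : (2*k+2) % (2*n) = 2*((k+1) % n) := by
  rcases eq_or_lt_of_le (Nat.succ_le_of_lt hk) with h | h
  · rw [show 2*k+2 = 2*n by omega, Nat.mod_self, show k+1 = n from h, Nat.mod_self]
  · rw [Nat.mod_eq_of_lt (show 2*k+2 < 2*n by omega), Nat.mod_eq_of_lt h]
    omega

lemma natL2 (hn : 0 < n) {k : ℕ} (hk : k < n) :
    (2*k + (2*n-1)) % (2*n) = 2*((k+(n-1)) % n) + 1 := by
  rcases Nat.eq_zero_or_pos k with h | h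
  · subst h
    rw [Nat.zero_add, Nat.zero_add, Nat.mod_eq_of_lt (show 2*n-1 < 2*n by omega),
      Nat.mod_eq_of_lt (show n-1 < n by omega)]
    omega
  · rw [show 2*k + (2*n-1) = (2*k-1) + 2*n by omega, Nat.add_mod_right,
      Nat.mod_eq_of_lt (show 2*k-1 < 2*n by omega), show k + (n-1) = (k-1) + n by omega,
      Nat.add_mod_right, Nat.mod_eq_of_lt (show k-1 < n by omega)]
    omega

lemma natL3 (hn : 0 < n) {k : ℕ} (hk : k < n) : ((k+(n-1)) % n + 1) % n = k := by
  rcases Nat.eq_zero_or_pos k with h | h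
  · subst h
    rw [Nat.zero_add, Nat.mod_eq_of_lt (show n-1 < n by omega), show n-1+1 = n by omega,
      Nat.mod_self]
  · rw [show k + (n-1) = (k-1) + n by omega, Nat.add_mod_right,
      Nat.mod_eq_of_lt (show k-1 < n by omega), show k-1+1 = k by omega, Nat.mod_eq_of_lt hk]

lemma natL4 (hn : 0 < n) {k : ℕ} (hk : k < n) : ((k+1) % n + (n-1)) % n = k := by
  rcases eq_or_lt_of_le (Nat.succ_le_of_lt hk) with h | h
  · rw [show k+1 = n from h, Nat.mod_self, Nat.zero_add, Nat.mod_eq_of_lt (show n-1 < n by omega)]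
    omega
  · rw [Nat.mod_eq_of_lt h, show k+1+(n-1) = k + n by omega, Nat.add_mod_right,
      Nat.mod_eq_of_lt hk]

end NatAux

section Aux
variable {dA dB n : ℕ}

/-- forward map of the index bijection -/
def toYmap (hn : 0 < n)
    (z : (Fin n → Fin dA × Fin dA) × (Fin n → Fin dB × Fin dB))
    (t : Fin (2*n)) : Fin dA × Fin dB :=
  if (t : ℕ) % 2 = 0 then
    ((z.1 ⟨(t : ℕ)/2, by have := t.isLt; omega⟩).2,
     (z.2 ⟨((t : ℕ)/2 + (n-1)) % n, Nat.mod_lt _ hn⟩).2)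
  else
    ((z.1 ⟨(t : ℕ)/2, by have := t.isLt; omega⟩).1,
     (z.2 ⟨(t : ℕ)/2, by have := t.isLt; omega⟩).1)

/-- backward map of the index bijection -/
def fromYmap (hn : 0 < n) (y : Fin (2*n) → Fin dA × Fin dB) :
    (Fin n → Fin dA × Fin dA) × (Fin n → Fin dB × Fin dB) :=
  (fun k => ((y ⟨2*(k : ℕ)+1, by have := k.isLt; omega⟩).1,
             (y ⟨2*(k : ℕ), by have := k.isLt; omega⟩).1),
   fun k => ((y ⟨2*(k : ℕ)+1, by have := k.isLt; omega⟩).2,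
             (y ⟨(2*(k : ℕ)+2) % (2*n), Nat.mod_lt _ (by omega)⟩).2))

lemma toYmap_even (hn : 0 < n)
    (z : (Fin n → Fin dA × Fin dA) × (Fin n → Fin dB × Fin dB))
    (t : Fin (2*n)) (k j : Fin n) (ht : (t : ℕ) = 2*(k : ℕ))
    (hj : ((k : ℕ) + (n-1)) % n = (j : ℕ)) :
    toYmap hn z t = ((z.1 k).2, (z.2 j).2) := by
  unfold toYmap
  rw [if_pos (by omega)]
  have h1 : (⟨(t : ℕ)/2, by have := t.isLt; omega⟩ : Fin n) = k := Fin.ext (by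
    show (t : ℕ)/2 = (k : ℕ); omega)
  have h2 : (⟨((t : ℕ)/2 + (n-1)) % n, Nat.mod_lt _ hn⟩ : Fin n) = j := Fin.ext (by
    show ((t : ℕ)/2 + (n-1)) % n = (j : ℕ)
    rw [show (t : ℕ)/2 = (k : ℕ) by omega]; exact hj)
  rw [h1, h2]

lemma toYmap_odd (hn : 0 < n)
    (z : (Fin n → Fin dA × Fin dA) × (Fin n → Fin dB × Fin dB))
    (t : Fin (2*n)) (k : Fin n) (ht : (t : ℕ) = 2*(k : ℕ)+1) :
    toYmap hn z t = ((z.1 k).1, (z.2 k).1) := by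
  unfold toYmap
  rw [if_neg (by omega)]
  have h1 : (⟨(t : ℕ)/2, by have := t.isLt; omega⟩ : Fin n) = k := Fin.ext (by
    show (t : ℕ)/2 = (k : ℕ); omega)
  rw [h1]

/-- The index bijection. -/
def pairEquivY (hn : 0 < n) :
    ((Fin n → Fin dA × Fin dA) × (Fin n → Fin dB × Fin dB)) ≃ (Fin (2*n) → Fin dA × Fin dB) where
  toFun := toYmap hn
  invFun := fromYmap hn
  left_inv := by
    rintro ⟨g, h⟩
    have hgh : ∀ k : Fin n, (fromYmap hn (toYmap hn (g, h))).1 k = g k ∧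
        (fromYmap hn (toYmap hn (g, h))).2 k = h k := by
      intro k
      have hk := k.isLt
      have e1 : toYmap hn (g, h) ⟨2*(k : ℕ)+1, by omega⟩ = ((g k).1, (h k).1) :=
        toYmap_odd hn (g, h) _ k rfl
      have e2 : toYmap hn (g, h) ⟨2*(k : ℕ), by omega⟩ =
          ((g k).2, (h ⟨((k : ℕ) + (n-1)) % n, Nat.mod_lt _ hn⟩).2) :=
        toYmap_even hn (g, h) _ k _ rfl rfl
      have e3 : toYmap hn (g, h) ⟨(2*(k : ℕ)+2) % (2*n), Nat.mod_lt _ (by omega)⟩ =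
          ((g ⟨((k : ℕ)+1) % n, Nat.mod_lt _ hn⟩).2, (h k).2) :=
        toYmap_even hn (g, h) _ ⟨((k : ℕ)+1) % n, Nat.mod_lt _ hn⟩ k (natL1 hn hk)
          (natL4 hn hk)
      constructor
      · show ((toYmap hn (g,h) ⟨2*(k : ℕ)+1, _⟩).1, (toYmap hn (g,h) ⟨2*(k : ℕ), _⟩).1) = g k
        rw [e1, e2]
      · show ((toYmap hn (g,h) ⟨2*(k : ℕ)+1, _⟩).2,
            (toYmap hn (g,h) ⟨(2*(k : ℕ)+2) % (2*n), _⟩).2) = h k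
        rw [e1, e3]
    refine Prod.ext ?_ ?_
    · funext k; exact (hgh k).1
    · funext k; exact (hgh k).2
  right_inv := by
    intro y
    funext t
    have htlt := t.isLt
    by_cases hpar : (t : ℕ) % 2 = 0
    · have e2 : toYmap hn (fromYmap hn y) t =
          (((fromYmap hn y).1 ⟨(t : ℕ)/2, by omega⟩).2,
           ((fromYmap hn y).2 ⟨((t : ℕ)/2 + (n-1)) % n, Nat.mod_lt _ hn⟩).2) :=
        toYmap_even hn _ t ⟨(t : ℕ)/2, by omega⟩ _
          (by show (t : ℕ) = 2*((t : ℕ)/2); omega) rfl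
      rw [e2]
      have hfst : ((fromYmap hn y).1 ⟨(t : ℕ)/2, by omega⟩).2 = (y t).1 := by
        show (y ⟨2*((t : ℕ)/2), _⟩).1 = (y t).1
        rw [show (⟨2*((t : ℕ)/2), by omega⟩ : Fin (2*n)) = t from Fin.ext (by
          show 2*((t : ℕ)/2) = (t : ℕ); omega)]
      have hsnd : ((fromYmap hn y).2 ⟨((t : ℕ)/2 + (n-1)) % n, Nat.mod_lt _ hn⟩).2 = (y t).2 := by
        show (y ⟨(2*(((t : ℕ)/2 + (n-1)) % n)+2) % (2*n), _⟩).2 = (y t).2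
        rw [show (⟨(2*(((t : ℕ)/2 + (n-1)) % n)+2) % (2*n), Nat.mod_lt _ (by omega)⟩
            : Fin (2*n)) = t from Fin.ext (by
          show (2*(((t : ℕ)/2 + (n-1)) % n)+2) % (2*n) = (t : ℕ)
          rw [natL1 hn (Nat.mod_lt _ hn), natL3 hn (show (t : ℕ)/2 < n by omega)]
          omega)]
      rw [hfst, hsnd]
    · have e2 : toYmap hn (fromYmap hn y) t =
          (((fromYmap hn y).1 ⟨(t : ℕ)/2, by omega⟩).1,
           ((fromYmap hn y).2 ⟨(t : ℕ)/2, by omega⟩).1) :=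
        toYmap_odd hn _ t ⟨(t : ℕ)/2, by omega⟩ (by
          show (t : ℕ) = 2*((t : ℕ)/2)+1; omega)
      rw [e2]
      show ((y ⟨2*((t : ℕ)/2)+1, _⟩).1, (y ⟨2*((t : ℕ)/2)+1, _⟩).2) = y t
      rw [show (⟨2*((t : ℕ)/2)+1, by omega⟩ : Fin (2*n)) = t from Fin.ext (by
        show 2*((t : ℕ)/2)+1 = (t : ℕ); omega)]
end Aux

theorem realignment_moment_as_swap_observable {dA dB n : ℕ} (hn : 1 ≤ n)
    (ρ : Matrix (Fin dA × Fin dB) (Fin dA × Fin dB) ℂ) (hρ : ρ.IsHermitian)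
    (σ τ : Equiv.Perm (Fin (2 * n)))
    (hσ : ∀ t : Fin (2 * n),
      ((σ t : Fin (2 * n)) : ℕ) = if (t : ℕ) % 2 = 0 then (t : ℕ) + 1 else (t : ℕ) - 1)
    (hτ : ∀ t : Fin (2 * n),
      ((τ t : Fin (2 * n)) : ℕ) =
        if (t : ℕ) % 2 = 1 then ((t : ℕ) + 1) % (2 * n)
        else ((t : ℕ) + (2 * n - 1)) % (2 * n)) :
    Matrix.trace ((realign ρ * (realign ρ)ᴴ) ^ n) =
      Matrix.trace (permOp2 σ τ * tensorPow ρ (2 * n)) := by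
  have hn0 : 0 < n := hn
  obtain ⟨m, rfl⟩ : ∃ m, n = m + 1 := ⟨n - 1, by omega⟩
  have hherm : ∀ a b, star (ρ a b) = ρ b a := by
    intro a b
    rw [← Matrix.conjTranspose_apply, hρ]
  -- Step B : the RHS as a single sum
  have hRHS : Matrix.trace (permOp2 σ τ * tensorPow ρ (2 * (m+1)))
      = ∑ y : Fin (2*(m+1)) → Fin dA × Fin dB,
          ∏ t, ρ (y t) ((y (σ t)).1, (y (τ t)).2) := by
    rw [Matrix.trace]
    simp only [Matrix.diag_apply, Matrix.mul_apply]
    rw [Finset.sum_comm]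
    refine Finset.sum_congr rfl fun y _ => ?_
    have hcond : ∀ x : Fin (2*(m+1)) → Fin dA × Fin dB,
        permOp2 (dA := dA) (dB := dB) σ τ x y
          = if x = (fun t => ((y (σ t)).1, (y (τ t)).2)) then 1 else 0 := by
      intro x
      unfold permOp2
      simp only [Matrix.of_apply]
      refine if_congr ?_ rfl rfl
      constructor
      · intro hx
        funext t
        exact Prod.ext (hx t).1 (hx t).2
      · intro hx t
        rw [hx]
        exact ⟨rfl, rfl⟩
    simp_rw [hcond, ite_mul, one_mul, zero_mul]
    rw [Finset.sum_ite_eq' Finset.univ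
      (fun t => ((y (σ t)).1, (y (τ t)).2)) (fun x => tensorPow ρ (2*(m+1)) y x)]
    simp only [Finset.mem_univ, if_true]
    unfold tensorPow
    simp only [Matrix.of_apply]
  rw [hRHS]
  -- Step A : the LHS as a double sum
  rw [trace_pow_eq_sum]
  have hterm : ∀ g : Fin (m+1) → Fin dA × Fin dA,
      (∏ k, (realign ρ * (realign ρ)ᴴ) (g k) (g (k+1)))
        = ∑ h : Fin (m+1) → Fin dB × Fin dB, ∏ k,
            (ρ ((g k).1, (h k).1) ((g k).2, (h k).2) *
             ρ ((g (k+1)).2, (h k).2) ((g (k+1)).1, (h k).1)) := by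
    intro g
    have hM : ∀ k : Fin (m+1), (realign ρ * (realign ρ)ᴴ) (g k) (g (k+1))
        = ∑ q : Fin dB × Fin dB,
            (ρ ((g k).1, q.1) ((g k).2, q.2) *
             ρ ((g (k+1)).2, q.2) ((g (k+1)).1, q.1)) := by
      intro k
      rw [Matrix.mul_apply]
      refine Finset.sum_congr rfl fun q _ => ?_
      rw [Matrix.conjTranspose_apply]
      unfold realign
      simp only [Matrix.of_apply]
      rw [hherm]
    simp_rw [hM]
    rw [Finset.prod_univ_sum]
    rw [Fintype.piFinset_univ]
  simp_rw [hterm]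
  -- Step C : the bijection
  rw [← Equiv.sum_comp (pairEquivY (dA := dA) (dB := dB) hn0)
    (fun y : Fin (2*(m+1)) → Fin dA × Fin dB => ∏ t, ρ (y t) ((y (σ t)).1, (y (τ t)).2)),
    Fintype.sum_prod_type]
  refine Finset.sum_congr rfl fun g _ => Finset.sum_congr rfl fun h _ => ?_
  have hpe : ∀ z, pairEquivY (dA := dA) (dB := dB) (n := m+1) hn0 z = toYmap hn0 z := fun _ => rfl
  rw [hpe]
  set Y := toYmap (dA := dA) (dB := dB) hn0 (g, h) with hY
  -- split the RHS product over pairs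
  have hsplit : (∏ t, ρ (Y t) ((Y (σ t)).1, (Y (τ t)).2))
      = ∏ p : Fin (m+1) × Fin 2,
          (fun t => ρ (Y t) ((Y (σ t)).1, (Y (τ t)).2))
            (⟨2*(p.1 : ℕ) + (p.2 : ℕ), by have := p.1.isLt; have := p.2.isLt; omega⟩
              : Fin (2*(m+1))) := by
    refine (Finset.prod_nbij'
      (fun p : Fin (m+1) × Fin 2 =>
        (⟨2*(p.1 : ℕ) + (p.2 : ℕ), by have := p.1.isLt; have := p.2.isLt; omega⟩
          : Fin (2*(m+1))))
      (fun t => (⟨(t : ℕ)/2, by have := t.isLt; omega⟩, ⟨(t : ℕ) % 2, by omega⟩))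
      (fun _ _ => Finset.mem_univ _) (fun _ _ => Finset.mem_univ _) ?_ ?_ ?_).symm
    · rintro ⟨a, b⟩ _
      have hb := b.isLt
      refine Prod.ext (Fin.ext ?_) (Fin.ext ?_)
      · show (2*(a : ℕ) + (b : ℕ))/2 = (a : ℕ); omega
      · show (2*(a : ℕ) + (b : ℕ)) % 2 = (b : ℕ); omega
    · intro t _
      refine Fin.ext ?_
      show 2*((t : ℕ)/2) + (t : ℕ) % 2 = (t : ℕ); omega
    · intro p _
      rfl
  rw [hsplit, Fintype.prod_prod_type]
  -- notation
  have hd : ∀ a : Fin (m+1), ((a : ℕ) + (m+1-1)) % (m+1) < m+1 := fun a => Nat.mod_lt _ hn0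
  set G1 : Fin (m+1) → ℂ :=
    fun j => ρ ((g j).1, (h j).1) ((g j).2, (h j).2) with hG1
  set G2 : Fin (m+1) → ℂ :=
    fun j => ρ ((g (j+1)).2, (h j).2) ((g (j+1)).1, (h j).1) with hG2
  set d : Fin (m+1) → Fin (m+1) := fun a => ⟨((a : ℕ) + (m+1-1)) % (m+1), hd a⟩ with hdd
  have hfact : ∀ a : Fin (m+1),
      (∏ b : Fin 2, (fun t => ρ (Y t) ((Y (σ t)).1, (Y (τ t)).2))
        ((⟨2*(a : ℕ) + ((b : Fin 2) : ℕ), by have := a.isLt; have := b.isLt; omega⟩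
          : Fin (2*(m+1)))))
      = G2 (d a) * G1 a := by
    intro a
    have hA := a.isLt
    rw [Fin.prod_univ_two]
    simp only []
    have hT0 : (⟨2*(a : ℕ) + (((0 : Fin 2)) : ℕ), by have := a.isLt; omega⟩ : Fin (2*(m+1)))
        = ⟨2*(a : ℕ), by omega⟩ := Fin.ext (by simp)
    have hT1 : (⟨2*(a : ℕ) + (((1 : Fin 2)) : ℕ), by have := a.isLt; omega⟩ : Fin (2*(m+1)))
        = ⟨2*(a : ℕ)+1, by omega⟩ := Fin.ext (by simp)
    rw [hT0, hT1]
    -- evaluations of Y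
    have f1 : Y (⟨2*(a : ℕ)+1, by omega⟩ : Fin (2*(m+1))) = ((g a).1, (h a).1) :=
      toYmap_odd hn0 (g, h) _ a rfl
    have f2 : Y (⟨2*(a : ℕ), by omega⟩ : Fin (2*(m+1))) = ((g a).2, (h (d a)).2) :=
      toYmap_even hn0 (g, h) _ a (d a) rfl rfl
    have f3 : Y (σ (⟨2*(a : ℕ), by omega⟩ : Fin (2*(m+1)))) = ((g a).1, (h a).1) := by
      refine toYmap_odd hn0 (g, h) _ a ?_
      rw [hσ]
      show (if (2*(a : ℕ)) % 2 = 0 then (2*(a : ℕ)) + 1 else (2*(a : ℕ)) - 1) = 2*(a : ℕ)+1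
      rw [if_pos (by omega)]
    have f4 : Y (σ (⟨2*(a : ℕ)+1, by omega⟩ : Fin (2*(m+1)))) = ((g a).2, (h (d a)).2) := by
      refine toYmap_even hn0 (g, h) _ a (d a) ?_ rfl
      rw [hσ]
      show (if (2*(a : ℕ)+1) % 2 = 0 then (2*(a : ℕ)+1) + 1 else (2*(a : ℕ)+1) - 1) = 2*(a : ℕ)
      rw [if_neg (by omega)]
      omega
    have f5 : Y (τ (⟨2*(a : ℕ), by omega⟩ : Fin (2*(m+1)))) = ((g (d a)).1, (h (d a)).1) := by
      refine toYmap_odd hn0 (g, h) _ (d a) ?_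
      rw [hτ]
      show (if (2*(a : ℕ)) % 2 = 1 then ((2*(a : ℕ)) + 1) % (2*(m+1))
        else ((2*(a : ℕ)) + (2*(m+1) - 1)) % (2*(m+1))) = 2*(((a : ℕ) + (m+1-1)) % (m+1))+1
      rw [if_neg (by omega)]
      exact natL2 hn0 hA
    have f6 : Y (τ (⟨2*(a : ℕ)+1, by omega⟩ : Fin (2*(m+1))))
        = ((g ⟨((a : ℕ)+1) % (m+1), Nat.mod_lt _ hn0⟩).2, (h a).2) := by
      refine toYmap_even hn0 (g, h) _ ⟨((a : ℕ)+1) % (m+1), Nat.mod_lt _ hn0⟩ a ?_ ?_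
      · rw [hτ]
        show (if (2*(a : ℕ)+1) % 2 = 1 then ((2*(a : ℕ)+1) + 1) % (2*(m+1))
          else ((2*(a : ℕ)+1) + (2*(m+1) - 1)) % (2*(m+1))) = 2*(((a : ℕ)+1) % (m+1))
        rw [if_pos (by omega), show 2*(a : ℕ)+1+1 = 2*(a : ℕ)+2 by omega]
        exact natL1 hn0 hA
      · exact natL4 hn0 hA
    rw [f1, f2, f3, f4, f5, f6]
    have hda1 : d a + 1 = a := by
      apply Fin.ext
      rw [Fin.val_add, Fin.val_one', Nat.add_mod_mod]
      show (((a : ℕ) + (m+1-1)) % (m+1) + 1) % (m+1) = (a : ℕ)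
      exact natL3 hn0 hA
    rw [hG1, hG2]
    simp only []
    rw [hda1]
  calc (∏ k, (ρ ((g k).1, (h k).1) ((g k).2, (h k).2) *
          ρ ((g (k+1)).2, (h k).2) ((g (k+1)).1, (h k).1)))
      = ∏ k, (G1 k * G2 k) := rfl
    _ = (∏ k, G1 k) * ∏ k, G2 k := by rw [Finset.prod_mul_distrib]
    _ = (∏ k, G1 k) * ∏ k, G2 (d k) := by
        congr 1
        have hc : ∀ a : Fin (m+1), d a = a + (⟨m+1-1, by omega⟩ : Fin (m+1)) := by
          intro a
          apply Fin.ext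
          rw [Fin.val_add]
        have := Equiv.prod_comp (Equiv.addRight (⟨m+1-1, by omega⟩ : Fin (m+1))) G2
        simp only [Equiv.coe_addRight] at this
        rw [← this]
        refine Finset.prod_congr rfl fun a _ => ?_
        rw [hc]
    _ = ∏ k, (G2 (d k) * G1 k) := by
        rw [Finset.prod_mul_distrib]
        ring
    _ = _ := by
        refine Finset.prod_congr rfl fun a _ => ?_
        rw [hfact]
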